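/- arXiv:1201.1795 — 3 statements merged into one kernel-verified Lean document; each statement's English description precedes it below -/
import Mathlib

section
/- For the real sequential method G defined by G(x) = lim_{n→∞} (x_n + x_{n+1})/2 (on the subgroup of real sequences for which this limit exists), G is a regular method, the sets {0} and {1} are G-sequentially closed, but their union {0,1} is not G-sequentially closed; in fact cl_G({0,1}) = {0, 1/2, 1}. -/
open Filter Topology Set Pointwise

/-- A method of sequential convergence on an abelian group `X`: an additive
function `G` defined on a subgroup of the group of `X`-valued sequences. -/
structure SeqMethod (X : Type*) [AddCommGroup X] where
  dom : AddSubgroup (ℕ → X)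
  G : dom →+ X

namespace SeqMethod

variable {X : Type*} [AddCommGroup X] (M : SeqMethod X)

/-- `G`-sequential closure of a set. -/
def cl (A : Set X) : Set X :=
  {l | ∃ x : M.dom, (∀ n, (x : ℕ → X) n ∈ A) ∧ M.G x = l}

/-- A set is `G`-sequentially closed if it contains its `G`-sequential closure. -/
def IsGClosed (A : Set X) : Prop := M.cl A ⊆ A

/-- A set is `G`-sequentially open if its complement is `G`-sequentially closed. -/
def IsGOpen (A : Set X) : Prop := M.IsGClosed Aᶜ

/-- `G`-interior: union of all `G`-sequentially open subsets contained in `A`. -/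
def gInterior (A : Set X) : Set X := ⋃₀ {U | M.IsGOpen U ∧ U ⊆ A}

/-- A method is regular if every convergent sequence is `G`-convergent to its limit. -/
def Regular [TopologicalSpace X] : Prop :=
  ∀ (x : ℕ → X) (l : X), Tendsto x atTop (nhds l) →
    ∃ h : x ∈ M.dom, M.G ⟨x, h⟩ = l

/-- A method is subsequential if every `G`-convergent sequence has a subsequence
converging (topologically) to the `G`-limit. -/
def Subsequential [TopologicalSpace X] : Prop :=
  ∀ (x : M.dom) (l : X), M.G x = l →
    ∃ φ : ℕ → ℕ, StrictMono φ ∧ Tendsto ((x : ℕ → X) ∘ φ) atTop (nhds l)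

/-- `G`-sequential continuity of `f` (at every point). -/
def GContinuous (f : X → X) : Prop :=
  ∀ (x : M.dom) (u : X), M.G x = u →
    ∃ h : (f ∘ (x : ℕ → X)) ∈ M.dom, M.G ⟨f ∘ (x : ℕ → X), h⟩ = f u

/-- `f` is `G`-sequentially open if images of `G`-sequentially open sets are
`G`-sequentially open. -/
def IsGOpenMap (f : X → X) : Prop := ∀ U, M.IsGOpen U → M.IsGOpen (f '' U)

/-- `f` is `G`-sequentially closed if images of `G`-sequentially closed sets are
`G`-sequentially closed. -/
def IsGClosedMap (f : X → X) : Prop := ∀ K, M.IsGClosed K → M.IsGClosed (f '' K)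

end SeqMethod
theorem averaging_method_example (M : SeqMethod ℝ)
    (hdom : ∀ x : ℕ → ℝ, x ∈ M.dom ↔
      ∃ L : ℝ, Filter.Tendsto (fun n => (x n + x (n + 1)) / 2) Filter.atTop (nhds L))
    (hG : ∀ (x : ℕ → ℝ) (h : x ∈ M.dom),
      Filter.Tendsto (fun n => (x n + x (n + 1)) / 2) Filter.atTop (nhds (M.G ⟨x, h⟩))) :
    M.Regular ∧ M.IsGClosed {0} ∧ M.IsGClosed {1} ∧
      ¬ M.IsGClosed ({0, 1} : Set ℝ) ∧
      M.cl ({0, 1} : Set ℝ) = {0, 1 / 2, 1} := by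
  -- the alternating 0,1 sequence
  have alt_dom : (fun n => if Even n then (0:ℝ) else 1) ∈ M.dom := by
    rw [hdom]
    refine ⟨1/2, ?_⟩
    have : (fun n => ((if Even n then (0:ℝ) else 1) + (if Even (n+1) then (0:ℝ) else 1)) / 2)
        = fun _ => (1:ℝ)/2 := by
      funext n
      rcases Nat.even_or_odd n with h | h
      · simp [h, Nat.even_add_one, Nat.not_even_iff_odd]
      · simp [Nat.not_even_iff_odd.2 h, Nat.even_add_one, h]
    rw [this]
    exact tendsto_const_nhds
  have alt_G : M.G ⟨_, alt_dom⟩ = 1/2 := by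
    have h1 := hG _ alt_dom
    have h2 : Filter.Tendsto (fun n => ((if Even n then (0:ℝ) else 1) + (if Even (n+1) then (0:ℝ) else 1)) / 2) Filter.atTop (nhds (1/2)) := by
      have : (fun n => ((if Even n then (0:ℝ) else 1) + (if Even (n+1) then (0:ℝ) else 1)) / 2)
          = fun _ => (1:ℝ)/2 := by
        funext n
        rcases Nat.even_or_odd n with h | h
        · simp [h, Nat.even_add_one, Nat.not_even_iff_odd]
        · simp [Nat.not_even_iff_odd.2 h, Nat.even_add_one, h]
      rw [this]; exact tendsto_const_nhds
    exact tendsto_nhds_unique h1 h2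
  -- regularity
  have hreg : M.Regular := by
    intro x l hx
    have hx1 : Filter.Tendsto (fun n => x (n+1)) Filter.atTop (nhds l) :=
      hx.comp (Filter.tendsto_add_atTop_nat 1)
    have havg : Filter.Tendsto (fun n => (x n + x (n+1)) / 2) Filter.atTop (nhds l) := by
      have h2 : (l + l)/2 = l := by ring
      exact h2 ▸ ((hx.add hx1).div_const 2)
    have hmem : x ∈ M.dom := (hdom x).2 ⟨l, havg⟩
    exact ⟨hmem, tendsto_nhds_unique (hG x hmem) havg⟩
  -- singleton closedness helper
  have hsingle : ∀ c : ℝ, M.IsGClosed {c} := by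
    intro c l hl
    obtain ⟨x, hx, hGx⟩ := hl
    have hconst : ∀ n, (x : ℕ → ℝ) n = c := fun n => hx n
    have havg : Filter.Tendsto (fun n => ((x:ℕ→ℝ) n + (x:ℕ→ℝ) (n+1)) / 2) Filter.atTop (nhds c) := by
      have : (fun n => ((x:ℕ→ℝ) n + (x:ℕ→ℝ) (n+1)) / 2) = fun _ => c := by
        funext n; rw [hconst n, hconst (n+1)]; ring
      rw [this]; exact tendsto_const_nhds
    have hMG : M.G x = c := tendsto_nhds_unique (hG _ x.2) havg
    simp only [Set.mem_singleton_iff]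
    rw [← hGx, hMG]
  -- cl {0,1} = {0, 1/2, 1}
  have hcl : M.cl ({0, 1} : Set ℝ) = {0, 1/2, 1} := by
    ext l
    constructor
    · rintro ⟨x, hx, hGx⟩
      have havg := hG _ x.2
      have hmemS : ∀ n, ((x:ℕ→ℝ) n + (x:ℕ→ℝ) (n+1)) / 2 ∈ ({0, 1/2, 1} : Set ℝ) := by
        intro n
        have h1 := hx n
        have h2 := hx (n+1)
        simp only [Set.mem_insert_iff, Set.mem_singleton_iff] at h1 h2 ⊢
        rcases h1 with h1 | h1 <;> rcases h2 with h2 | h2 <;> rw [h1, h2] <;> norm_num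
      have hclosed : IsClosed ({0, 1/2, 1} : Set ℝ) :=
        (Set.toFinite _).isClosed
      have := hclosed.mem_of_tendsto havg (Filter.Eventually.of_forall hmemS)
      rwa [hGx] at this
    · intro hl
      rcases hl with h | h | h
      · refine ⟨⟨fun _ => 0, ?_⟩, fun n => Or.inl rfl, ?_⟩
        · rw [hdom]; exact ⟨0, by simpa using tendsto_const_nhds⟩
        · have := hreg (fun _ => 0) 0 tendsto_const_nhds
          obtain ⟨hm, hv⟩ := this
          rw [h]; exact hv
      · refine ⟨⟨_, alt_dom⟩, ?_, ?_⟩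
        · intro n; by_cases hn : Even n <;> simp [hn]
        · rw [alt_G, h]
      · refine ⟨⟨fun _ => 1, ?_⟩, fun n => Or.inr rfl, ?_⟩
        · rw [hdom]; exact ⟨1, by simpa using tendsto_const_nhds⟩
        · have := hreg (fun _ => 1) 1 tendsto_const_nhds
          obtain ⟨hm, hv⟩ := this
          rw [h]; exact hv
  refine ⟨hreg, hsingle 0, hsingle 1, ?_, hcl⟩
  intro hcl01
  have : (1/2 : ℝ) ∈ M.cl ({0,1} : Set ℝ) := by rw [hcl]; right; left; rfl
  have := hcl01 this
  rcases this with h | h <;> norm_num at h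
end

section
/- For the method G(x) = lim (x_n + x_{n+1})/2 on ℝ and A = {0,1}, the G-closure is not idempotent: cl_G(cl_G(A)) = {0, 1/4, 1/2, 3/4, 1} ≠ {0, 1/2, 1} = cl_G(A). -/
open Filter Topology Set Pointwise

theorem averaging_method_closure_not_idempotent (M : SeqMethod ℝ)
    (hdom : ∀ x : ℕ → ℝ, x ∈ M.dom ↔
      ∃ L : ℝ, Filter.Tendsto (fun n => (x n + x (n + 1)) / 2) Filter.atTop (nhds L))
    (hG : ∀ (x : ℕ → ℝ) (h : x ∈ M.dom),
      Filter.Tendsto (fun n => (x n + x (n + 1)) / 2) Filter.atTop (nhds (M.G ⟨x, h⟩))) :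
    M.cl (M.cl ({0, 1} : Set ℝ)) = {0, 1 / 4, 1 / 2, 3 / 4, 1} ∧
      M.cl ({0, 1} : Set ℝ) = {0, 1 / 2, 1} ∧
      M.cl (M.cl ({0, 1} : Set ℝ)) ≠ M.cl ({0, 1} : Set ℝ) := by
  -- A general helper: `(a+b)/2 ∈ cl S` whenever `a, b ∈ S`, via the alternating sequence.
  have mem_cl : ∀ (a b : ℝ) (S : Set ℝ), a ∈ S → b ∈ S → (a + b) / 2 ∈ M.cl S := by
    intro a b S ha hb
    set x : ℕ → ℝ := fun n => if Even n then a else b with hxdef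
    have havg : ∀ n, (x n + x (n + 1)) / 2 = (a + b) / 2 := by
      intro n
      by_cases he : Even n
      · simp [x, he, Nat.even_add_one]
      · simp [x, he, Nat.even_add_one]
        ring
    have hconst : Filter.Tendsto (fun n => (x n + x (n + 1)) / 2) Filter.atTop
        (nhds ((a + b) / 2)) := by
      simp only [havg]; exact tendsto_const_nhds
    have hxdom : x ∈ M.dom := (hdom x).2 ⟨(a + b) / 2, hconst⟩
    refine ⟨⟨x, hxdom⟩, fun n => ?_, ?_⟩
    · by_cases he : Even n <;> simp [x, he, ha, hb]
    · exact tendsto_nhds_unique (hG x hxdom) hconst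
  -- A general helper: `cl S ⊆ T` if `T` is closed and contains all midpoints of `S`.
  have cl_sub : ∀ (S T : Set ℝ), IsClosed T → (∀ a ∈ S, ∀ b ∈ S, (a + b) / 2 ∈ T) →
      M.cl S ⊆ T := by
    rintro S T hT hST l ⟨⟨y, hy⟩, hmem, hGy⟩
    have h1 := hG y hy
    rw [hGy] at h1
    exact hT.mem_of_tendsto h1
      (Filter.Eventually.of_forall fun n => hST _ (hmem n) _ (hmem (n + 1)))
  have hfin3 : IsClosed ({0, 1 / 2, 1} : Set ℝ) :=
    (Set.toFinite _).isClosed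
  have hfin5 : IsClosed ({0, 1 / 4, 1 / 2, 3 / 4, 1} : Set ℝ) :=
    (Set.toFinite _).isClosed
  have h01 : ∀ a ∈ ({0, 1} : Set ℝ), ∀ b ∈ ({0, 1} : Set ℝ),
      (a + b) / 2 ∈ ({0, 1 / 2, 1} : Set ℝ) := by
    rintro a (rfl | rfl) b (rfl | rfl) <;> norm_num [Set.mem_insert_iff]
  have h3 : ∀ a ∈ ({0, 1 / 2, 1} : Set ℝ), ∀ b ∈ ({0, 1 / 2, 1} : Set ℝ),
      (a + b) / 2 ∈ ({0, 1 / 4, 1 / 2, 3 / 4, 1} : Set ℝ) := by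
    rintro a (rfl | rfl | rfl) b (rfl | rfl | rfl) <;> norm_num [Set.mem_insert_iff]
  have hclA : M.cl ({0, 1} : Set ℝ) = {0, 1 / 2, 1} := by
    apply Set.Subset.antisymm (cl_sub _ _ hfin3 h01)
    rintro l (rfl | rfl | rfl)
    · rw [show (0 : ℝ) = (0 + 0) / 2 by norm_num]
      exact mem_cl _ _ _ (by simp) (by simp)
    · rw [show (1 / 2 : ℝ) = (0 + 1) / 2 by norm_num]
      exact mem_cl _ _ _ (by simp) (by simp)
    · rw [show (1 : ℝ) = (1 + 1) / 2 by norm_num]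
      exact mem_cl _ _ _ (by simp) (by simp)
  have hclclA : M.cl (M.cl ({0, 1} : Set ℝ)) = {0, 1 / 4, 1 / 2, 3 / 4, 1} := by
    rw [hclA]
    apply Set.Subset.antisymm (cl_sub _ _ hfin5 h3)
    rintro l (rfl | rfl | rfl | rfl | rfl)
    · rw [show (0 : ℝ) = (0 + 0) / 2 by norm_num]
      exact mem_cl _ _ _ (by simp) (by simp)
    · rw [show (1 / 4 : ℝ) = (0 + 1 / 2) / 2 by norm_num]
      exact mem_cl _ _ _ (by simp) (by simp)
    · rw [show (1 / 2 : ℝ) = (1 / 2 + 1 / 2) / 2 by norm_num]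
      exact mem_cl _ _ _ (by simp) (by simp)
    · rw [show (3 / 4 : ℝ) = (1 / 2 + 1) / 2 by norm_num]
      exact mem_cl _ _ _ (by simp) (by simp)
    · rw [show (1 : ℝ) = (1 + 1) / 2 by norm_num]
      exact mem_cl _ _ _ (by simp) (by simp)
  refine ⟨hclclA, hclA, ?_⟩
  rw [hclclA, hclA]
  intro h
  have : (1 / 4 : ℝ) ∈ ({0, 1 / 2, 1} : Set ℝ) := h ▸ (by norm_num [Set.mem_insert_iff])
  norm_num [Set.mem_insert_iff] at this
end

section
/- For a regular method G and any a ∈ X, the translation map f_a : X → X, f_a(x) = a + x, is G-sequentially continuous, G-sequentially open, and G-sequentially closed; consequently, if A, B ⊆ X and B is G-sequentially open, then the sumset A + B = {a + b : a ∈ A, b ∈ B} is G-sequentially open. -/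
open Filter Topology Set Pointwise

variable {X : Type*} [AddCommGroup X] [TopologicalSpace X] [IsTopologicalAddGroup X] [FirstCountableTopology X] [T2Space X]


lemma const_mem (M : SeqMethod X) (hreg : M.Regular) (a : X) :
    ∃ h : (fun _ : ℕ => a) ∈ M.dom, M.G ⟨_, h⟩ = a :=
  hreg _ a tendsto_const_nhds

lemma trans_closed (M : SeqMethod X) (hreg : M.Regular) (a : X) (K : Set X)
    (hK : M.IsGClosed K) : M.IsGClosed ((fun x => a + x) '' K) := by
  obtain ⟨hc, hGc⟩ := const_mem M hreg a
  intro l hl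
  obtain ⟨x, hx, hGx⟩ := hl
  set y : M.dom := x - ⟨_, hc⟩ with hy
  have hyK : ∀ n, (y : ℕ → X) n ∈ K := by
    intro n
    obtain ⟨k, hk, hk2⟩ := hx n
    have : (y : ℕ → X) n = (x : ℕ → X) n - a := rfl
    rw [this, ← hk2]
    simpa using hk
  have hGy : M.G y = l - a := by
    rw [hy, map_sub, hGx, hGc]
  have hla : l - a ∈ K := hK ⟨y, hyK, hGy⟩
  exact ⟨l - a, hla, add_sub_cancel a l⟩

lemma trans_open (M : SeqMethod X) (hreg : M.Regular) (a : X) (U : Set X)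
    (hU : M.IsGOpen U) : M.IsGOpen ((fun x => a + x) '' U) := by
  have hbij : Function.Bijective (fun x : X => a + x) :=
    (Equiv.addLeft a).bijective
  unfold SeqMethod.IsGOpen
  rw [← Set.image_compl_eq hbij]
  exact trans_closed M hreg a Uᶜ hU

theorem translation_gContinuous_open_closed (M : SeqMethod X) (hreg : M.Regular) :
    (∀ a : X, M.GContinuous (fun x => a + x) ∧ M.IsGOpenMap (fun x => a + x) ∧
        M.IsGClosedMap (fun x => a + x)) ∧
      (∀ A B : Set X, M.IsGOpen B → M.IsGOpen (A + B)) := by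
  constructor
  · intro a
    obtain ⟨hc, hGc⟩ := const_mem M hreg a
    refine ⟨?_, fun U hU => trans_open M hreg a U hU,
      fun K hK => trans_closed M hreg a K hK⟩
    intro x u hGx
    have hmem : ((fun x => a + x) ∘ (x : ℕ → X)) ∈ M.dom := by
      have : ((fun x => a + x) ∘ (x : ℕ → X)) = (⟨_, hc⟩ + x : M.dom) := rfl
      rw [this]; exact (⟨_, hc⟩ + x : M.dom).2
    refine ⟨hmem, ?_⟩
    have : (⟨_, hmem⟩ : M.dom) = (⟨_, hc⟩ + x : M.dom) := rfl
    rw [this, map_add, hGc, hGx]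
  · intro A B hB
    intro l hl
    obtain ⟨x, hx, hGx⟩ := hl
    intro hlAB
    obtain ⟨a, ha, b, hb, hab⟩ := hlAB
    have himg : M.IsGOpen ((fun x => a + x) '' B) := trans_open M hreg a B hB
    have hxc : ∀ n, (x : ℕ → X) n ∈ ((fun x => a + x) '' B)ᶜ := by
      intro n hmem
      obtain ⟨b', hb', hb2⟩ := hmem
      exact hx n ⟨a, ha, b', hb', hb2⟩
    exact himg ⟨x, hxc, hGx⟩ ⟨b, hb, hab⟩
end
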